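/- Let x_1, …, x_n ∈ ℝ^{2n} be an orthonormal family spanning a Lagrangian subspace, i.e. x_iᵀ x_j = δ_{ij} and x_iᵀ J x_j = 0 for all i, j, and let Ĥ := X_R X_Lᵀ + Jᵀ X_L X_Rᵀ J. Then Ĥᵀ Ĥ = X_L X_Lᵀ + Jᵀ X_R X_Rᵀ J, and this matrix is idempotent: (Ĥᵀ Ĥ)² = Ĥᵀ Ĥ. -/
import Mathlib


open Matrix

noncomputable section

/-- The canonical skew-symmetric matrix `J = [[0, I],[-I, 0]]`. -/
def Jmat (n : ℕ) : Matrix (Fin n ⊕ Fin n) (Fin n ⊕ Fin n) ℝ :=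
  Matrix.fromBlocks 0 1 (-1) 0

/-- A matrix `H` is skew-Hamiltonian if `Jᵀ Hᵀ J = H`. -/
def IsSkewHamiltonian {n : ℕ} (H : Matrix (Fin n ⊕ Fin n) (Fin n ⊕ Fin n) ℝ) : Prop :=
  (Jmat n)ᵀ * Hᵀ * Jmat n = H

/-- `X_L = [x_1 ⋯ x_{n-1}]`. -/
def XL {n : ℕ} (x : Fin n → (Fin n ⊕ Fin n) → ℝ) :
    Matrix (Fin n ⊕ Fin n) (Fin (n - 1)) ℝ :=
  Matrix.of fun i j => x ⟨j.1, lt_of_lt_of_le j.2 (Nat.sub_le n 1)⟩ i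

/-- `X_R = [x_2 ⋯ x_n]`. -/
def XR {n : ℕ} (x : Fin n → (Fin n ⊕ Fin n) → ℝ) :
    Matrix (Fin n ⊕ Fin n) (Fin (n - 1)) ℝ :=
  Matrix.of fun i j => x ⟨j.1 + 1, by have := j.2; omega⟩ i

/-- The Moore–Penrose pseudoinverse `X_L⁺ = (X_Lᵀ X_L)⁻¹ X_Lᵀ` of `X_L`
(for `X_L` with linearly independent columns). -/
def XLpinv {n : ℕ} (x : Fin n → (Fin n ⊕ Fin n) → ℝ) :
    Matrix (Fin (n - 1)) (Fin n ⊕ Fin n) ℝ :=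
  ((XL x)ᵀ * XL x)⁻¹ * (XL x)ᵀ

/-- `Ĥ = X_R X_L⁺ + Jᵀ (X_R X_L⁺)ᵀ J`. -/
def Hhat {n : ℕ} (x : Fin n → (Fin n ⊕ Fin n) → ℝ) :
    Matrix (Fin n ⊕ Fin n) (Fin n ⊕ Fin n) ℝ :=
  XR x * XLpinv x + (Jmat n)ᵀ * (XR x * XLpinv x)ᵀ * Jmat n

/-- `H` realizes the Krylov relations `H x_k = x_{k+1}`, `k = 1, …, n-1`. -/
def KrylovRel {n : ℕ} (H : Matrix (Fin n ⊕ Fin n) (Fin n ⊕ Fin n) ℝ)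
    (x : Fin n → (Fin n ⊕ Fin n) → ℝ) : Prop :=
  ∀ k : Fin (n - 1), H *ᵥ x ⟨k.1, lt_of_lt_of_le k.2 (Nat.sub_le n 1)⟩
    = x ⟨k.1 + 1, by have := k.2; omega⟩

/-- For an orthonormal basis of a Lagrangian subspace and
`Ĥ = X_R X_Lᵀ + Jᵀ X_L X_Rᵀ J`, one has `Ĥᵀ Ĥ = X_L X_Lᵀ + Jᵀ X_R X_Rᵀ J`, and this
matrix is idempotent. -/
theorem Hhat_transpose_mul_Hhat {n : ℕ} (x : Fin n → (Fin n ⊕ Fin n) → ℝ)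
    (hON : ∀ i j : Fin n, x i ⬝ᵥ x j = if i = j then 1 else 0)
    (hLag : ∀ i j : Fin n, x i ⬝ᵥ (Jmat n *ᵥ x j) = 0) :
    (XR x * (XL x)ᵀ + (Jmat n)ᵀ * (XL x * (XR x)ᵀ) * Jmat n)ᵀ *
      (XR x * (XL x)ᵀ + (Jmat n)ᵀ * (XL x * (XR x)ᵀ) * Jmat n)
      = XL x * (XL x)ᵀ + (Jmat n)ᵀ * (XR x * (XR x)ᵀ) * Jmat n ∧
    (XL x * (XL x)ᵀ + (Jmat n)ᵀ * (XR x * (XR x)ᵀ) * Jmat n) *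
      (XL x * (XL x)ᵀ + (Jmat n)ᵀ * (XR x * (XR x)ᵀ) * Jmat n)
      = XL x * (XL x)ᵀ + (Jmat n)ᵀ * (XR x * (XR x)ᵀ) * Jmat n := by
  set L := XL x with hL
  set R := XR x with hR
  set Jm := Jmat n with hJm
  have hJt : Jmᵀ = -Jm := by
    rw [hJm, Jmat, Matrix.fromBlocks_transpose, Matrix.fromBlocks_neg]
    norm_num
  have hJJ : Jm * Jm = -1 := by
    rw [hJm, Jmat, Matrix.fromBlocks_multiply, show (-1 : Matrix (Fin n ⊕ Fin n) (Fin n ⊕ Fin n) ℝ)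
      = Matrix.fromBlocks (-1) 0 0 (-1) from by rw [← Matrix.fromBlocks_one, Matrix.fromBlocks_neg]; norm_num]
    norm_num
  have hLL : Lᵀ * L = 1 := by
    ext i j
    have : (Lᵀ * L) i j = x ⟨i.1, lt_of_lt_of_le i.2 (Nat.sub_le n 1)⟩ ⬝ᵥ
        x ⟨j.1, lt_of_lt_of_le j.2 (Nat.sub_le n 1)⟩ := by
      simp [hL, XL, Matrix.mul_apply, dotProduct]
    rw [this, hON]
    simp [Matrix.one_apply, Fin.ext_iff]
  have hRR : Rᵀ * R = 1 := by
    ext i j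
    have : (Rᵀ * R) i j = x ⟨i.1 + 1, by have := i.2; omega⟩ ⬝ᵥ
        x ⟨j.1 + 1, by have := j.2; omega⟩ := by
      simp [hR, XR, Matrix.mul_apply, dotProduct]
    rw [this, hON]
    simp [Matrix.one_apply, Fin.ext_iff]
  have hLJR : Lᵀ * (Jm * R) = 0 := by
    ext i j
    have : (Lᵀ * (Jm * R)) i j = x ⟨i.1, lt_of_lt_of_le i.2 (Nat.sub_le n 1)⟩ ⬝ᵥ
        (Jm *ᵥ x ⟨j.1 + 1, by have := j.2; omega⟩) := by
      simp [hL, hR, XL, XR, Matrix.mul_apply, Matrix.mulVec, dotProduct]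
    rw [this, hJm, hLag]
    simp
  have hRJL : Rᵀ * (Jm * L) = 0 := by
    ext i j
    have : (Rᵀ * (Jm * L)) i j = x ⟨i.1 + 1, by have := i.2; omega⟩ ⬝ᵥ
        (Jm *ᵥ x ⟨j.1, lt_of_lt_of_le j.2 (Nat.sub_le n 1)⟩) := by
      simp [hL, hR, XL, XR, Matrix.mul_apply, Matrix.mulVec, dotProduct]
    rw [this, hJm, hLag]
    simp
  have eRR : ∀ X : Matrix (Fin (n-1)) (Fin n ⊕ Fin n) ℝ, Rᵀ * (R * X) = X := fun X => by
    rw [← Matrix.mul_assoc, hRR, Matrix.one_mul]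
  have eLL : ∀ X : Matrix (Fin (n-1)) (Fin n ⊕ Fin n) ℝ, Lᵀ * (L * X) = X := fun X => by
    rw [← Matrix.mul_assoc, hLL, Matrix.one_mul]
  have eJJ : ∀ X : Matrix (Fin n ⊕ Fin n) (Fin n ⊕ Fin n) ℝ, Jm * (Jm * X) = -X := fun X => by
    rw [← Matrix.mul_assoc, hJJ]; simp
  have eLJR : ∀ X : Matrix (Fin (n-1)) (Fin n ⊕ Fin n) ℝ, Lᵀ * (Jm * (R * X)) = 0 := fun X => by
    rw [show Jm * (R * X) = (Jm * R) * X from (Matrix.mul_assoc _ _ _).symm, ← Matrix.mul_assoc, hLJR, Matrix.zero_mul]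
  have eRJL : ∀ X : Matrix (Fin (n-1)) (Fin n ⊕ Fin n) ℝ, Rᵀ * (Jm * (L * X)) = 0 := fun X => by
    rw [show Jm * (L * X) = (Jm * L) * X from (Matrix.mul_assoc _ _ _).symm, ← Matrix.mul_assoc, hRJL, Matrix.zero_mul]
  constructor
  · simp only [transpose_add, Matrix.transpose_mul, transpose_transpose, hJt, transpose_neg,
      Matrix.neg_mul, Matrix.mul_neg, neg_neg]
    simp only [Matrix.mul_add, Matrix.add_mul, Matrix.neg_mul, Matrix.mul_neg, neg_neg,
      Matrix.mul_assoc, eRR, eLL, eJJ, eLJR, eRJL, hLJR, hRJL, Matrix.mul_zero,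
      Matrix.zero_mul, Matrix.mul_one, neg_zero, add_zero, zero_add]
  · simp only [hJt, Matrix.mul_add, Matrix.add_mul, Matrix.neg_mul, Matrix.mul_neg, neg_neg,
      Matrix.mul_assoc, eRR, eLL, eJJ, eLJR, eRJL, hLJR, hRJL, Matrix.mul_zero,
      Matrix.zero_mul, Matrix.mul_one, neg_zero, add_zero, zero_add]
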